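/- arXiv:1309.4975 — 2 statements merged into one kernel-verified Lean document; each statement's English description precedes it below -/
import Mathlib

section
/- Let $G$ be a distribution function in the Gumbel max-domain of attraction with positive scaling function $w$. Then $w$ is self-neglecting: for every $x \in \mathbb{R}$, $\lim_{v\to\infty} w(v + x/w(v))/w(v) = 1$. -/
open MeasureTheory Filter

/-- If the distribution function `G` (with infinite upper endpoint) is in the
Gumbel max-domain of attraction with positive scaling function `w`, then `w` is
self-neglecting: `w(v + x/w(v))/w(v) → 1` for every `x`. -/
theorem stmt6 (G w : ℝ → ℝ) (hmono : Monotone G) (hG1 : ∀ v, G v < 1)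
    (hGlim : Tendsto G atTop (nhds 1)) (hG0 : Tendsto G atBot (nhds 0))
    (hw : ∀ v, 0 < w v)
    (hGumbel : ∀ x : ℝ,
      Tendsto (fun v => (1 - G (v + x / w v)) / (1 - G v)) atTop (nhds (Real.exp (-x)))) :
    ∀ x : ℝ, Tendsto (fun v => w (v + x / w v) / w v) atTop (nhds 1) := by
  intro x
  have hUpos : ∀ v, (0:ℝ) < 1 - G v := fun v => by linarith [hG1 v]
  have hUanti : ∀ a b : ℝ, a ≤ b → 1 - G b ≤ 1 - G a := fun a b hab => by
    have := hmono hab; linarith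
  have hU0 : Tendsto (fun v => 1 - G v) atTop (nhds 0) := by
    simpa using ((tendsto_const_nhds : Tendsto (fun _ : ℝ => (1:ℝ)) atTop (nhds 1)).sub hGlim)
  set t : ℝ → ℝ := fun v => v + x / w v with ht
  have hB : Tendsto (fun v => (1 - G (t v)) / (1 - G v)) atTop (nhds (Real.exp (-x))) :=
    hGumbel x
  have hUt0 : Tendsto (fun v => 1 - G (t v)) atTop (nhds 0) := by
    have heq : (fun v => 1 - G (t v))
        = fun v => ((1 - G (t v)) / (1 - G v)) * (1 - G v) :=
      funext fun v => (div_mul_cancel₀ _ (hUpos v).ne').symm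
    rw [heq]
    simpa using hB.mul hU0
  have htTop : Tendsto t atTop atTop := by
    rw [tendsto_atTop]
    intro M
    have h1 : ∀ᶠ v in atTop, 1 - G (t v) < 1 - G M :=
      hUt0.eventually_lt_const (hUpos M)
    filter_upwards [h1] with v hv
    by_contra h
    push_neg at h
    have := hUanti _ _ h.le
    linarith
  have hD : ∀ y : ℝ, Tendsto (fun v => (1 - G (t v + y / w (t v))) / (1 - G v)) atTop
      (nhds (Real.exp (-(x + y)))) := by
    intro y
    have h1 : Tendsto (fun v => (1 - G (t v + y / w (t v))) / (1 - G (t v))) atTop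
        (nhds (Real.exp (-y))) := by
      have := (hGumbel y).comp htTop
      exact this
    have h2 := h1.mul hB
    have heq : (fun v => ((1 - G (t v + y / w (t v))) / (1 - G (t v)))
          * ((1 - G (t v)) / (1 - G v)))
        = fun v => (1 - G (t v + y / w (t v))) / (1 - G v) := by
      funext v
      have h3 := (hUpos (t v)).ne'
      have h4 := (hUpos v).ne'
      field_simp
    have hexp : Real.exp (-y) * Real.exp (-x) = Real.exp (-(x + y)) := by
      rw [← Real.exp_add]; ring_nf
    rw [heq, hexp] at h2
    exact h2
  -- lower bound
  have hlo : ∀ ε : ℝ, 0 < ε → ε < 1 → ∀ᶠ v in atTop, 1 - ε < w (t v) / w v := by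
    intro ε hε hε1
    have hlt : Real.exp (-(x + 1)) < Real.exp (-(x + (1 - ε))) :=
      Real.exp_lt_exp.mpr (by linarith)
    have hev := (hGumbel (x + 1)).eventually_lt (hD (1 - ε)) hlt
    filter_upwards [hev] with v hv
    by_contra h
    push_neg at h
    have hwle : w (t v) ≤ (1 - ε) * w v := (div_le_iff₀ (hw v)).mp h
    have h1 : 1 / w v ≤ (1 - ε) / w (t v) := by
      rw [div_le_div_iff₀ (hw v) (hw (t v))]
      linarith
    have h2 : v + (x + 1) / w v ≤ t v + (1 - ε) / w (t v) := by
      show v + (x + 1) / w v ≤ (v + x / w v) + (1 - ε) / w (t v)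
      rw [add_div]
      linarith
    have h3 := hUanti _ _ h2
    have h4 : (1 - G (t v + (1 - ε) / w (t v))) / (1 - G v)
        ≤ (1 - G (v + (x + 1) / w v)) / (1 - G v) :=
      (div_le_div_iff_of_pos_right (hUpos v)).mpr h3
    linarith
  -- upper bound
  have hup : ∀ ε : ℝ, 0 < ε → ∀ᶠ v in atTop, w (t v) / w v < 1 + ε := by
    intro ε hε
    have hlt : Real.exp (-(x + (1 + ε))) < Real.exp (-(x + 1)) :=
      Real.exp_lt_exp.mpr (by linarith)
    have hev := (hD (1 + ε)).eventually_lt (hGumbel (x + 1)) hlt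
    filter_upwards [hev] with v hv
    by_contra h
    push_neg at h
    have hwle : (1 + ε) * w v ≤ w (t v) := (le_div_iff₀ (hw v)).mp h
    have h1 : (1 + ε) / w (t v) ≤ 1 / w v := by
      rw [div_le_div_iff₀ (hw (t v)) (hw v)]
      linarith
    have h2 : t v + (1 + ε) / w (t v) ≤ v + (x + 1) / w v := by
      show (v + x / w v) + (1 + ε) / w (t v) ≤ v + (x + 1) / w v
      rw [add_div x 1]
      linarith
    have h3 := hUanti _ _ h2
    have h4 : (1 - G (v + (x + 1) / w v)) / (1 - G v)
        ≤ (1 - G (t v + (1 + ε) / w (t v))) / (1 - G v) :=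
      (div_le_div_iff_of_pos_right (hUpos v)).mpr h3
    linarith
  -- assemble
  rw [Metric.tendsto_nhds]
  intro ε hε
  have hε'0 : 0 < min ε (1/2) := lt_min hε (by norm_num)
  have hε'1 : min ε (1/2) < 1 := lt_of_le_of_lt (min_le_right _ _) (by norm_num)
  have hle : min ε (1/2) ≤ ε := min_le_left _ _
  filter_upwards [hlo (min ε (1/2)) hε'0 hε'1, hup (min ε (1/2)) hε'0] with v h1 h2
  simp only [ht] at h1 h2
  rw [Real.dist_eq, abs_lt]
  constructor <;> linarith
end

section
/- Let $\zeta_1 = \sum_{i=1}^m X_{i1}^2$ where $(X_{11},\dots,X_{m1}) = R(O_1,\dots,O_m)$ with $R > 0$ independent of $(O_1,\dots,O_m)$ satisfying $\sum_i O_i^2 = 1$ a.s., and $R$ has infinite upper endpoint. Let $\zeta_2 = \sum_{i=1}^m (\rho_1 X_{i1} + W_{i1})^2$ with $(W_{11},\dots,W_{m1})$ independent of the $X$'s, $\rho_1 \neq 0$. Then conditionally on $\zeta_1 = v$, $(\zeta_2 - \rho_1^2 v)/(2\rho_1\sqrt{v})$ has the same distribution as $\sum_{i=1}^m O_i W_{i1}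 + \frac{1}{2\rho_1\sqrt{v}}\sum_{i=1}^m W_{i1}^2$, and hence converges weakly to the distribution of $\sum_{i=1}^m O_i W_{i1}$ as $v \to \infty$. -/
open MeasureTheory ProbabilityTheory Filter

private lemma sqrt_tendsto_atTop' : Tendsto Real.sqrt atTop atTop := by
  refine tendsto_atTop_atTop.mpr fun b => ⟨(max b 0)^2, fun a ha => ?_⟩
  calc b ≤ max b 0 := le_max_left _ _
    _ = Real.sqrt ((max b 0)^2) := (Real.sqrt_sq (le_max_right _ _)).symm
    _ ≤ Real.sqrt a := Real.sqrt_le_sqrt ha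


/-- Polar representation model: `X_{i1} = R·Oᵢ` with `R > 0` (infinite upper
endpoint) independent of `(O₁,…,Oₘ)` with `∑ Oᵢ² = 1` a.s., and `(W_{11},…,W_{m1})`
independent of the `X`'s; `ζ₁ = ∑ X_{i1}² = R²`, `ζ₂ = ∑ (ρ₁ X_{i1} + W_{i1})²`. Then,
conditionally on `ζ₁ = v` (a.e. `v`), `(ζ₂ - ρ₁²v)/(2ρ₁√v)` is distributed as
`∑ Oᵢ W_{i1} + (∑ W_{i1}²)/(2ρ₁√v)`, and hence converges weakly, as `v → ∞`, to the law of
`∑ Oᵢ W_{i1}`. -/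
theorem stmt12 {Ω : Type*} [MeasurableSpace Ω] (P : Measure Ω) [IsProbabilityMeasure P]
    (m : ℕ) (ρ₁ : ℝ) (hρ₁ : ρ₁ ≠ 0)
    (R : Ω → ℝ) (O W : Fin m → Ω → ℝ)
    (hR : Measurable R) (hO : ∀ i, Measurable (O i)) (hW : ∀ i, Measurable (W i))
    (hRpos : ∀ᵐ ω ∂P, 0 < R ω)
    (hRtail : ∀ M : ℝ, 0 < P {ω | M < R ω})
    (hsphere : ∀ᵐ ω ∂P, ∑ i, (O i ω) ^ 2 = 1)
    (hRO : IndepFun R (fun ω => fun i => O i ω) P)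
    (hindep : IndepFun (fun ω => (R ω, fun i => O i ω)) (fun ω => fun i => W i ω) P)
    -- `ζ₁`, `ζ₂` and the representation `T v` of the conditioned normalized variable:
    (ζ₁ ζ₂ : Ω → ℝ) (hζ₁ : ζ₁ = fun ω => ∑ i, (R ω * O i ω) ^ 2)
    (hζ₂ : ζ₂ = fun ω => ∑ i, (ρ₁ * R ω * O i ω + W i ω) ^ 2)
    (T : ℝ → Ω → ℝ)
    (hT : ∀ v, T v = fun ω =>
      (∑ i, O i ω * W i ω) + (∑ i, (W i ω) ^ 2) / (2 * ρ₁ * Real.sqrt v)) :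
    (∀ᵐ v ∂(P.map ζ₁),
        ((condDistrib ζ₂ ζ₁ P) v).map (fun y => (y - ρ₁ ^ 2 * v) / (2 * ρ₁ * Real.sqrt v))
          = P.map (T v)) ∧
      (∀ f : BoundedContinuousFunction ℝ ℝ,
        Tendsto (fun v : ℝ => ∫ y, f y ∂(P.map (T v))) atTop
          (nhds (∫ y, f y ∂(P.map (fun ω => ∑ i, O i ω * W i ω))))) := by
  classical
  set O' : Ω → (Fin m → ℝ) := fun ω => fun i => O i ω with hO'def
  set W' : Ω → (Fin m → ℝ) := fun ω => fun i => W i ω with hW'def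
  have mO' : Measurable O' := measurable_pi_lambda _ hO
  have mW' : Measurable W' := measurable_pi_lambda _ hW
  have mζ₁ : Measurable ζ₁ := by
    rw [hζ₁]; exact Finset.measurable_sum _ fun i _ => (hR.mul (hO i)).pow_const 2
  have mζ₂ : Measurable ζ₂ := by
    rw [hζ₂]
    exact Finset.measurable_sum _ fun i _ =>
      (((measurable_const.mul hR).mul (hO i)).add (hW i)).pow_const 2
  set S : (Fin m → ℝ) × (Fin m → ℝ) → ℝ := fun z => ∑ i, z.1 i * z.2 i with hSdef
  set Q : (Fin m → ℝ) × (Fin m → ℝ) → ℝ := fun z => ∑ i, (z.2 i) ^ 2 with hQdef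
  have mS : Measurable S := Finset.measurable_sum _ fun i _ =>
    ((measurable_pi_apply i).comp measurable_fst).mul
      ((measurable_pi_apply i).comp measurable_snd)
  have mQ : Measurable Q := Finset.measurable_sum _ fun i _ =>
    ((measurable_pi_apply i).comp measurable_snd).pow_const 2
  set F : ℝ → (Fin m → ℝ) × (Fin m → ℝ) → ℝ :=
    fun v z => ρ₁ ^ 2 * v + 2 * ρ₁ * Real.sqrt v * S z + Q z with hFdef
  have mFj : Measurable (fun p : ℝ × ((Fin m → ℝ) × (Fin m → ℝ)) => F p.1 p.2) := by
    apply Measurable.add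
    · apply Measurable.add
      · exact measurable_const.mul measurable_fst
      · exact ((measurable_const.mul
          (Real.continuous_sqrt.measurable.comp measurable_fst)).mul (mS.comp measurable_snd))
    · exact mQ.comp measurable_snd
  have mF : ∀ v, Measurable (F v) := fun v =>
    (measurable_const.add (mS.const_mul _)).add mQ
  set ν : Measure ((Fin m → ℝ) × (Fin m → ℝ)) := P.map (fun ω => (O' ω, W' ω)) with hνdef
  haveI : IsProbabilityMeasure ν := Measure.isProbabilityMeasure_map (mO'.prodMk mW').aemeasurable
  set κ : Kernel ℝ ℝ :=
    { toFun := fun v => ν.map (F v)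
      measurable' := by
        apply Measure.measurable_of_measurable_coe
        intro s hs
        have : (fun v => ν.map (F v) s)
            = fun v => ν (Prod.mk v ⁻¹'
              ((fun p : ℝ × ((Fin m → ℝ) × (Fin m → ℝ)) => F p.1 p.2) ⁻¹' s)) := by
          funext v; rw [Measure.map_apply (mF v) hs]; rfl
        rw [this]
        exact measurable_measure_prodMk_left (mFj hs) } with hκdef
  have hκapp : ∀ v, κ v = ν.map (F v) := fun _ => rfl
  haveI : IsMarkovKernel κ :=
    ⟨fun v => by rw [hκapp v]; exact Measure.isProbabilityMeasure_map (mF v).aemeasurable⟩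
  -- independence chain
  have hOW : IndepFun O' W' P := hindep.comp measurable_snd measurable_id
  have law_RO : P.map (fun ω => (R ω, O' ω)) = (P.map R).prod (P.map O') :=
    (indepFun_iff_map_prod_eq_prod_map_map hR.aemeasurable mO'.aemeasurable).mp hRO
  have law_OW : ν = (P.map O').prod (P.map W') :=
    (indepFun_iff_map_prod_eq_prod_map_map mO'.aemeasurable mW'.aemeasurable).mp hOW
  have law_triple : P.map (fun ω => ((R ω, O' ω), W' ω))
      = ((P.map R).prod (P.map O')).prod (P.map W') := by
    rw [(indepFun_iff_map_prod_eq_prod_map_map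
      ((hR.prodMk mO').aemeasurable) mW'.aemeasurable).mp hindep, law_RO]
  have law_R_OW : P.map (fun ω => (R ω, (O' ω, W' ω))) = (P.map R).prod ν := by
    have hcomp : (fun ω => (R ω, (O' ω, W' ω)))
        = (MeasurableEquiv.prodAssoc : (ℝ × (Fin m → ℝ)) × (Fin m → ℝ) ≃ᵐ _)
          ∘ (fun ω => ((R ω, O' ω), W' ω)) := rfl
    rw [hcomp, ← Measure.map_map MeasurableEquiv.prodAssoc.measurable
      ((hR.prodMk mO').prodMk mW'), law_triple, Measure.prodAssoc_prod, law_OW]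
  have hR_OW : IndepFun R (fun ω => (O' ω, W' ω)) P :=
    (indepFun_iff_map_prod_eq_prod_map_map hR.aemeasurable
      (mO'.prodMk mW').aemeasurable).mpr law_R_OW
  have hR2_OW : IndepFun (fun ω => R ω ^ 2) (fun ω => (O' ω, W' ω)) P :=
    hR_OW.comp (measurable_id.pow_const 2) measurable_id
  have law_H : P.map (fun ω => (R ω ^ 2, (O' ω, W' ω)))
      = (P.map (fun ω => R ω ^ 2)).prod ν :=
    (indepFun_iff_map_prod_eq_prod_map_map (hR.pow_const 2).aemeasurable
      (mO'.prodMk mW').aemeasurable).mp hR2_OW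
  -- a.e. identities
  have hae1 : ζ₁ =ᵐ[P] fun ω => R ω ^ 2 := by
    filter_upwards [hsphere] with ω h
    rw [hζ₁]
    simp only [mul_pow, ← Finset.mul_sum, h, mul_one]
  have expand : ∀ ω, (∑ i, (ρ₁ * R ω * O i ω + W i ω) ^ 2)
      = ρ₁ ^ 2 * R ω ^ 2 * (∑ i, (O i ω) ^ 2)
        + 2 * ρ₁ * R ω * (∑ i, O i ω * W i ω) + ∑ i, (W i ω) ^ 2 := by
    intro ω
    rw [Finset.mul_sum, Finset.mul_sum, ← Finset.sum_add_distrib, ← Finset.sum_add_distrib]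
    exact Finset.sum_congr rfl fun i _ => by ring
  have hae2 : (fun ω => (ζ₁ ω, ζ₂ ω))
      =ᵐ[P] (fun ω => ((R ω ^ 2 : ℝ), F (R ω ^ 2) (O' ω, W' ω))).comp id := by
    filter_upwards [hsphere, hRpos, hae1] with ω h hr h1
    have hsq : Real.sqrt (R ω ^ 2) = R ω := Real.sqrt_sq hr.le
    simp only [Function.comp, id]
    refine Prod.ext h1 ?_
    rw [hζ₂]
    simp only [hFdef, hSdef, hQdef, hsq]
    rw [expand ω, h]
    ring
  set G : ℝ × ((Fin m → ℝ) × (Fin m → ℝ)) → ℝ × ℝ := fun p => (p.1, F p.1 p.2) with hGdef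
  have mG : Measurable G := measurable_fst.prodMk mFj
  have hmapζ₁ : P.map ζ₁ = P.map (fun ω => R ω ^ 2) := Measure.map_congr hae1
  have key : P.map (fun ω => (ζ₁ ω, ζ₂ ω)) = (P.map ζ₁) ⊗ₘ κ := by
    have h2 : (fun ω => (ζ₁ ω, ζ₂ ω))
        =ᵐ[P] G ∘ (fun ω => (R ω ^ 2, (O' ω, W' ω))) := hae2
    rw [Measure.map_congr h2,
      ← Measure.map_map mG ((hR.pow_const 2).prodMk (mO'.prodMk mW')), law_H, hmapζ₁]
    ext s hs
    rw [Measure.map_apply mG hs, Measure.compProd_apply hs, Measure.prod_apply (mG hs)]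
    refine lintegral_congr fun v => ?_
    rw [hκapp v, Measure.map_apply (mF v) (measurable_prodMk_left hs)]
    rfl
  -- conditional distribution identification
  haveI : IsProbabilityMeasure (P.map (fun ω => (ζ₁ ω, ζ₂ ω))) :=
    Measure.isProbabilityMeasure_map (mζ₁.prodMk mζ₂).aemeasurable
  have hfst : (P.map (fun ω => (ζ₁ ω, ζ₂ ω))).fst = P.map ζ₁ :=
    Measure.fst_map_prodMk mζ₂
  have hcd : ∀ᵐ v ∂(P.map ζ₁), condDistrib ζ₂ ζ₁ P v = κ v := by
    have huniq := eq_condKernel_of_measure_eq_compProd κ (by rw [hfst, ← key])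
    rw [hfst] at huniq
    rw [condDistrib]
    filter_upwards [huniq] with v hv using hv.symm
  have hpos : ∀ᵐ v ∂(P.map ζ₁), 0 < v := by
    rw [Measure.map_congr hae1]
    rw [ae_map_iff (hR.pow_const 2).aemeasurable measurableSet_Ioi]
    filter_upwards [hRpos] with ω hr using pow_pos hr 2
  constructor
  · filter_upwards [hcd, hpos] with v hv hvpos
    have hsq : Real.sqrt v ≠ 0 := (Real.sqrt_pos.mpr hvpos).ne'
    have hne : (2 * ρ₁ * Real.sqrt v) ≠ 0 :=
      mul_ne_zero (mul_ne_zero two_ne_zero hρ₁) hsq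
    rw [hv, hκapp v,
      Measure.map_map (show Measurable fun y : ℝ =>
        (y - ρ₁ ^ 2 * v) / (2 * ρ₁ * Real.sqrt v) by fun_prop) (mF v)]
    have hTeq : (fun y => (y - ρ₁ ^ 2 * v) / (2 * ρ₁ * Real.sqrt v)) ∘ F v
        = fun z => S z + Q z / (2 * ρ₁ * Real.sqrt v) := by
      funext z
      simp only [Function.comp, hFdef]
      field_simp
      ring
    rw [hTeq, hνdef,
      Measure.map_map (show Measurable fun z => S z + Q z / (2 * ρ₁ * Real.sqrt v) from
        mS.add (mQ.div_const _)) (mO'.prodMk mW'), hT v]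
    rfl
  · intro f
    set S' : Ω → ℝ := fun ω => ∑ i, O i ω * W i ω with hS'def
    have mS' : Measurable S' := Finset.measurable_sum _ fun i _ => (hO i).mul (hW i)
    have mQ' : Measurable (fun ω => ∑ i, (W i ω) ^ 2) :=
      Finset.measurable_sum _ fun i _ => (hW i).pow_const 2
    have mT : ∀ v, Measurable (T v) := fun v => by
      rw [hT v]; exact mS'.add (mQ'.div_const _)
    have hint : ∀ v, ∫ y, f y ∂(P.map (T v)) = ∫ ω, f (T v ω) ∂P := fun v =>
      integral_map (mT v).aemeasurable f.continuous.measurable.aestronglyMeasurable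
    have hint0 : ∫ y, f y ∂(P.map S') = ∫ ω, f (S' ω) ∂P :=
      integral_map mS'.aemeasurable f.continuous.measurable.aestronglyMeasurable
    simp only [hint, hint0]
    refine tendsto_integral_filter_of_dominated_convergence (fun _ => ‖f‖)
      (Eventually.of_forall fun v =>
        (f.continuous.measurable.comp (mT v)).aestronglyMeasurable)
      (Eventually.of_forall fun v =>
        Eventually.of_forall fun ω => f.norm_coe_le_norm _)
      (integrable_const _)
      (Eventually.of_forall fun ω => ?_)
    have h0 : Tendsto (fun v : ℝ => (∑ i, (W i ω) ^ 2) / (2 * ρ₁ * Real.sqrt v))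
        atTop (nhds 0) := by
      have heq : (fun v : ℝ => (∑ i, (W i ω) ^ 2) / (2 * ρ₁ * Real.sqrt v))
          = fun v => ((∑ i, (W i ω) ^ 2) / (2 * ρ₁)) * (Real.sqrt v)⁻¹ := by
        funext v
        rw [← div_div, div_eq_mul_inv]
      rw [heq]
      have := (tendsto_inv_atTop_zero.comp sqrt_tendsto_atTop').const_mul
        ((∑ i, (W i ω) ^ 2) / (2 * ρ₁))
      simpa using this
    have hTv : Tendsto (fun v => T v ω) atTop (nhds (S' ω)) := by
      have : (fun v => T v ω)
          = fun v => S' ω + (∑ i, (W i ω) ^ 2) / (2 * ρ₁ * Real.sqrt v) := by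
        funext v; rw [hT v]
      rw [this]
      simpa using tendsto_const_nhds.add h0
    exact (f.continuous.tendsto _).comp hTv
end
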